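/- arXiv:2210.08717 — 4 statements merged into one kernel-verified Lean document; each statement's English description precedes it below -/
import Mathlib

section
/- Given real numbers a_1,...,a_n and b_1,...,b_n with all a_i, b_i > 0, if the sequence a_i/b_i is strictly increasing in i, then the sequence z_i = (Σ_{j=i}^n a_j) / (Σ_{j=i}^n b_j) is strictly increasing in i. -/
open Finset

/-- BRAVO likelihood ratio. -/
noncomputable def sigmaRatio (k n : ℕ) (pa p0 : ℝ) : ℝ :=
  (pa ^ k * (1 - pa) ^ (n - k)) / (p0 ^ k * (1 - p0) ^ (n - k))

/-- Binomial pmf. -/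
noncomputable def binPMF (n k : ℕ) (p : ℝ) : ℝ :=
  (n.choose k : ℝ) * p ^ k * (1 - p) ^ (n - k)

/-- Upper tail of the binomial distribution. -/
noncomputable def binTail (k n : ℕ) (p : ℝ) : ℝ :=
  ∑ i ∈ Finset.Icc k n, binPMF n i p

/-- MINERVA/PROVIDENCE first-round tail ratio. -/
noncomputable def tau1 (k n : ℕ) (pa p0 : ℝ) : ℝ :=
  binTail k n pa / binTail k n p0

theorem stmt_2 (n : ℕ) (a b : ℕ → ℝ)
    (ha : ∀ i ∈ Finset.Icc 1 n, 0 < a i) (hb : ∀ i ∈ Finset.Icc 1 n, 0 < b i)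
    (hmono : ∀ i, 1 ≤ i → i < n → a i / b i < a (i + 1) / b (i + 1)) :
    ∀ i, 1 ≤ i → i < n →
      (∑ j ∈ Finset.Icc i n, a j) / (∑ j ∈ Finset.Icc i n, b j) <
      (∑ j ∈ Finset.Icc (i + 1) n, a j) / (∑ j ∈ Finset.Icc (i + 1) n, b j) := by
  intro i hi1 hin
  have hmem : ∀ j, 1 ≤ j → j ≤ n → j ∈ Finset.Icc 1 n := by
    intro j h1 h2; simp [Finset.mem_Icc, h1, h2]
  have hai : 0 < a i := ha i (hmem i hi1 hin.le)
  have hbi : 0 < b i := hb i (hmem i hi1 hin.le)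
  have hchain : ∀ j, i < j → j ≤ n → a i * b j < b i * a j := by
    intro j
    induction j with
    | zero => omega
    | succ k ih =>
      intro hik hkn
      rcases eq_or_lt_of_le (Nat.succ_le_of_lt hik) with h | h
      · have hk : k = i := by omega
        subst hk
        have hm := hmono k hi1 hin
        have hbk1 : 0 < b (k + 1) := hb _ (hmem _ (by omega) hkn)
        rw [div_lt_div_iff₀ hbi hbk1] at hm
        linarith [hm]
      · have h1 := ih (by omega) (by omega)
        have hak : 0 < a k := ha k (hmem k (by omega) (by omega))
        have hbk : 0 < b k := hb k (hmem k (by omega) (by omega))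
        have hbk1 : 0 < b (k + 1) := hb _ (hmem _ (by omega) hkn)
        have hak1 : 0 < a (k + 1) := ha _ (hmem _ (by omega) hkn)
        have hm := hmono k (by omega) (by omega)
        rw [div_lt_div_iff₀ hbk hbk1] at hm
        nlinarith
  set A := ∑ j ∈ Finset.Icc (i + 1) n, a j with hA
  set B := ∑ j ∈ Finset.Icc (i + 1) n, b j with hB
  have hne : (Finset.Icc (i + 1) n).Nonempty := by
    rw [Finset.nonempty_Icc]; omega
  have hApos : 0 < A := Finset.sum_pos (fun j hj => by
    rw [Finset.mem_Icc] at hj; exact ha j (hmem j (by omega) hj.2)) hne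
  have hBpos : 0 < B := Finset.sum_pos (fun j hj => by
    rw [Finset.mem_Icc] at hj; exact hb j (hmem j (by omega) hj.2)) hne
  have key : a i * B < b i * A := by
    rw [hA, hB, Finset.mul_sum, Finset.mul_sum]
    refine Finset.sum_lt_sum_of_nonempty hne fun j hj => ?_
    rw [Finset.mem_Icc] at hj
    exact hchain j (by omega) hj.2
  have hinsert : Finset.Icc i n = insert i (Finset.Icc (i + 1) n) := by
    rw [Finset.Icc_add_one_left_eq_Ioc, Finset.Ioc_insert_left hin.le]
  have hni : i ∉ Finset.Icc (i + 1) n := by simp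
  have hsa : ∑ j ∈ Finset.Icc i n, a j = a i + A := by
    rw [hA, hinsert, Finset.sum_insert hni]
  have hsb : ∑ j ∈ Finset.Icc i n, b j = b i + B := by
    rw [hB, hinsert, Finset.sum_insert hni]
  rw [hsa, hsb, div_lt_div_iff₀ (by linarith) hBpos]
  nlinarith
end

section
/- For 0 < p_0 < p_a < 1 and n > 0, the tail ratio τ_1(k) = (Σ_{i=k}^n C(n,i) p_a^i (1-p_a)^{n-i}) / (Σ_{i=k}^n C(n,i) p_0^i (1-p_0)^{n-i}) is strictly increasing as a function of k for 0 ≤ k ≤ n. -/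
open Finset

lemma key_ineq (p0 pa : ℝ) (h0 : 0 < p0) (h1 : p0 < pa) (h2 : pa < 1)
    {k i n : ℕ} (hk : k < i) (hi : i ≤ n) :
    pa ^ k * (1 - pa) ^ (n - k) * (p0 ^ i * (1 - p0) ^ (n - i)) <
      pa ^ i * (1 - pa) ^ (n - i) * (p0 ^ k * (1 - p0) ^ (n - k)) := by
  obtain ⟨d, rfl⟩ : ∃ d, i = k + d + 1 := ⟨i - k - 1, by omega⟩
  set m := n - (k + d + 1) with hm
  have h1' : n - k = m + (d + 1) := by omega
  have hpa0 : (0:ℝ) < pa := h0.trans h1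
  have hp01 : p0 < 1 := h1.trans h2
  have hcore : p0 ^ (d + 1) * (1 - pa) ^ (d + 1) < pa ^ (d + 1) * (1 - p0) ^ (d + 1) := by
    rw [← mul_pow, ← mul_pow]
    apply pow_lt_pow_left₀ _ (by nlinarith) (by omega)
    nlinarith
  have hpos : (0:ℝ) < pa ^ k * p0 ^ k * (1 - pa) ^ m * (1 - p0) ^ m := by
    have : (0:ℝ) < 1 - pa := by linarith
    have : (0:ℝ) < 1 - p0 := by linarith
    positivity
  rw [h1']
  calc pa ^ k * (1 - pa) ^ (m + (d + 1)) * (p0 ^ (k + d + 1) * (1 - p0) ^ m)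
      = (pa ^ k * p0 ^ k * (1 - pa) ^ m * (1 - p0) ^ m) * (p0 ^ (d + 1) * (1 - pa) ^ (d + 1)) := by
        ring
    _ < (pa ^ k * p0 ^ k * (1 - pa) ^ m * (1 - p0) ^ m) * (pa ^ (d + 1) * (1 - p0) ^ (d + 1)) :=
        mul_lt_mul_of_pos_left hcore hpos
    _ = pa ^ (k + d + 1) * (1 - pa) ^ m * (p0 ^ k * (1 - p0) ^ (m + (d + 1))) := by
        ring

lemma binPMF_pos {p : ℝ} (hp0 : 0 < p) (hp1 : p < 1) {n k : ℕ} (hk : k ≤ n) :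
    0 < binPMF n k p := by
  have hc : 0 < (n.choose k : ℝ) := by exact_mod_cast Nat.choose_pos hk
  have : (0:ℝ) < 1 - p := by linarith
  unfold binPMF
  positivity

lemma binTail_pos {p : ℝ} (hp0 : 0 < p) (hp1 : p < 1) {n k : ℕ} (hk : k ≤ n) :
    0 < binTail k n p := by
  unfold binTail
  apply Finset.sum_pos
  · intro i hi
    exact binPMF_pos hp0 hp1 (Finset.mem_Icc.mp hi).2
  · exact ⟨k, Finset.mem_Icc.mpr ⟨le_rfl, hk⟩⟩

lemma binTail_split {p : ℝ} {n k : ℕ} (hk : k ≤ n) :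
    binTail k n p = binPMF n k p + binTail (k + 1) n p := by
  unfold binTail
  rw [Finset.Icc_add_one_left_eq_Ioc, ← Finset.Ioc_insert_left hk,
    Finset.sum_insert Finset.left_notMem_Ioc]

lemma tau1_step (p0 pa : ℝ) (n : ℕ) (h0 : 0 < p0) (h1 : p0 < pa) (h2 : pa < 1)
    {k : ℕ} (hk : k < n) : tau1 k n pa p0 < tau1 (k + 1) n pa p0 := by
  have hpa0 : (0:ℝ) < pa := h0.trans h1
  have hp01 : p0 < 1 := h1.trans h2
  have hk' : k ≤ n := hk.le
  have hk1 : k + 1 ≤ n := hk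
  set A := binPMF n k pa with hA
  set B := binTail (k + 1) n pa with hB
  set C := binPMF n k p0 with hC
  set D := binTail (k + 1) n p0 with hD
  have hApos : 0 < A := binPMF_pos hpa0 h2 hk'
  have hBpos : 0 < B := binTail_pos hpa0 h2 hk1
  have hCpos : 0 < C := binPMF_pos h0 hp01 hk'
  have hDpos : 0 < D := binTail_pos h0 hp01 hk1
  have hcross : A * D < B * C := by
    have hterm : ∀ i ∈ Finset.Icc (k + 1) n,
        binPMF n k pa * binPMF n i p0 < binPMF n i pa * binPMF n k p0 := by
      intro i hi
      obtain ⟨hi1, hi2⟩ := Finset.mem_Icc.mp hi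
      have hkey := key_ineq p0 pa h0 h1 h2 (show k < i by omega) hi2
      have hc : (0:ℝ) < (n.choose k : ℝ) * (n.choose i : ℝ) := by
        have := Nat.choose_pos hk'
        have := Nat.choose_pos hi2
        positivity
      unfold binPMF
      calc (n.choose k : ℝ) * pa ^ k * (1 - pa) ^ (n - k) *
            ((n.choose i : ℝ) * p0 ^ i * (1 - p0) ^ (n - i))
          = ((n.choose k : ℝ) * (n.choose i : ℝ)) *
            (pa ^ k * (1 - pa) ^ (n - k) * (p0 ^ i * (1 - p0) ^ (n - i))) := by ring
        _ < ((n.choose k : ℝ) * (n.choose i : ℝ)) *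
            (pa ^ i * (1 - pa) ^ (n - i) * (p0 ^ k * (1 - p0) ^ (n - k))) :=
            mul_lt_mul_of_pos_left hkey hc
        _ = (n.choose i : ℝ) * pa ^ i * (1 - pa) ^ (n - i) *
            ((n.choose k : ℝ) * p0 ^ k * (1 - p0) ^ (n - k)) := by ring
    have hAD : A * D = ∑ i ∈ Finset.Icc (k + 1) n, binPMF n k pa * binPMF n i p0 := by
      rw [hA, hD]; unfold binTail; rw [Finset.mul_sum]
    have hBC : B * C = ∑ i ∈ Finset.Icc (k + 1) n, binPMF n i pa * binPMF n k p0 := by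
      rw [hB, hC]; unfold binTail; rw [Finset.sum_mul]
    rw [hAD, hBC]
    exact Finset.sum_lt_sum_of_nonempty
      ⟨k + 1, Finset.mem_Icc.mpr ⟨le_rfl, hk1⟩⟩ hterm
  have e1 : tau1 k n pa p0 = (A + B) / (C + D) := by
    unfold tau1
    rw [binTail_split hk', binTail_split hk']
  have e2 : tau1 (k + 1) n pa p0 = B / D := rfl
  rw [e1, e2, div_lt_div_iff₀ (by linarith) hDpos]
  nlinarith

theorem stmt_3 (p0 pa : ℝ) (n : ℕ) (h0 : 0 < p0) (h1 : p0 < pa) (h2 : pa < 1)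
    (hn : 0 < n) :
    StrictMonoOn (fun k : ℕ => tau1 k n pa p0) (Set.Icc 0 n) := by
  have main : ∀ b, b ≤ n → ∀ a, a < b → tau1 a n pa p0 < tau1 b n pa p0 := by
    intro b
    induction b with
    | zero => intro _ a ha; omega
    | succ c ih =>
      intro hb a ha
      have hc : c < n := by omega
      rcases Nat.lt_succ_iff_lt_or_eq.mp ha with h | h
      · exact (ih (by omega) a h).trans (tau1_step p0 pa n h0 h1 h2 hc)
      · subst h
        exact tau1_step p0 pa n h0 h1 h2 hc
  intro a _ b hb hab
  exact main b hb.2 a hab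
end

section
/- For 0 < p_0 < p_a < 1, n > 0, and 0 ≤ k ≤ n, the tail ratio is at least the pointwise likelihood ratio: τ_1(k, p_a, p_0, n) ≥ σ(k, p_a, p_0, n). -/
open Finset

lemma key_ineq_s4 (p0 pa : ℝ) (h0 : 0 < p0) (h1 : p0 < pa) (h2 : pa < 1)
    (k m d : ℕ) (C : ℝ) (hC : 0 ≤ C) :
    (pa ^ k * (1 - pa) ^ (m + d)) * (C * p0 ^ (k + d) * (1 - p0) ^ m) ≤
      C * pa ^ (k + d) * (1 - pa) ^ m * (p0 ^ k * (1 - p0) ^ (m + d)) := by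
  have hpa : 0 < pa := h0.trans h1
  have hq0 : 0 < 1 - p0 := by linarith
  have hqa : 0 < 1 - pa := by linarith
  have hbase : p0 * (1 - pa) ≤ pa * (1 - p0) := by nlinarith
  have h := pow_le_pow_left₀ (by positivity) hbase d
  have h2 := mul_le_mul_of_nonneg_left h
    (show (0:ℝ) ≤ C * pa ^ k * p0 ^ k * (1 - pa) ^ m * (1 - p0) ^ m by positivity)
  simp only [pow_add, mul_pow] at *
  nlinarith [h2]

theorem stmt_4 (p0 pa : ℝ) (n k : ℕ) (h0 : 0 < p0) (h1 : p0 < pa) (h2 : pa < 1)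
    (hn : 0 < n) (hk : k ≤ n) :
    tau1 k n pa p0 ≥ sigmaRatio k n pa p0 := by
  have hpa : 0 < pa := h0.trans h1
  have hq0 : 0 < 1 - p0 := by linarith
  have hqa : 0 < 1 - pa := by linarith
  have hB : 0 < p0 ^ k * (1 - p0) ^ (n - k) := by positivity
  have htail0 : 0 < binTail k n p0 := by
    have hmem : k ∈ Finset.Icc k n := by simp [hk]
    have hpos : 0 < binPMF n k p0 := by
      have : 0 < (n.choose k : ℝ) := by
        exact_mod_cast Nat.choose_pos hk
      unfold binPMF; positivity
    have hle : binPMF n k p0 ≤ binTail k n p0 := by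
      apply Finset.single_le_sum (f := fun i => binPMF n i p0) _ hmem
      intro i hi
      have : 0 < (n.choose i : ℝ) := by
        exact_mod_cast Nat.choose_pos (Finset.mem_Icc.mp hi).2
      unfold binPMF; positivity
    linarith
  have hsum : sigmaRatio k n pa p0 * binTail k n p0 ≤ binTail k n pa := by
    rw [binTail, binTail, Finset.mul_sum]
    apply Finset.sum_le_sum
    intro i hi
    obtain ⟨hki, hin⟩ := Finset.mem_Icc.mp hi
    unfold sigmaRatio binPMF
    obtain ⟨d, rfl⟩ := Nat.exists_eq_add_of_le hki
    rw [div_mul_eq_mul_div, div_le_iff₀ hB]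
    have hnk : n - k = (n - (k + d)) + d := by omega
    rw [hnk]
    exact key_ineq_s4 p0 pa h0 h1 h2 k (n - (k + d)) d (n.choose (k + d)) (by positivity)
  rw [tau1, ge_iff_le, le_div_iff₀ htail0]
  exact hsum
end

section
/- For any risk limit α ∈ (0,1) and 0 < p_0 < p_a < 1, if the End-of-Round BRAVO stopping condition holds at round j, i.e., σ(k_j, p_a, p_0, n_j) ≥ 1/α, then the PROVIDENCE stopping condition also holds at round j: σ(k_{j-1}, p_a, p_0, n_{j-1}) · τ_1(k_j - k_{j-1}, p_a, p_0, n_j - n_{j-1}) ≥ 1/α. (PROVIDENCE is at least as efficient as EoR BRAVO.) -/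
open Finset

lemma sigma_alt (k n : ℕ) (pa p0 : ℝ) (h0 : 0 < p0) (h1 : p0 < pa) (h2 : pa < 1) :
    sigmaRatio k n pa p0 = (pa / p0) ^ k * ((1 - pa) / (1 - p0)) ^ (n - k) := by
  have hp0 : (0:ℝ) < 1 - p0 := by linarith
  unfold sigmaRatio
  rw [div_pow, div_pow]
  field_simp

lemma sigma_pos (k n : ℕ) (pa p0 : ℝ) (h0 : 0 < p0) (h1 : p0 < pa) (h2 : pa < 1) :
    0 < sigmaRatio k n pa p0 := by
  have hpa : 0 < pa := lt_trans h0 h1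
  have h1pa : (0:ℝ) < 1 - pa := by linarith
  have h1p0 : (0:ℝ) < 1 - p0 := by linarith
  exact div_pos (by positivity) (by positivity)

lemma sigma_mul (kprev kj nprev nj : ℕ) (pa p0 : ℝ)
    (h0 : 0 < p0) (h1 : p0 < pa) (h2 : pa < 1)
    (hkk : kprev ≤ kj) (hnn : nprev ≤ nj)
    (hkprev : kprev ≤ nprev) (hmarg : kj - kprev ≤ nj - nprev) :
    sigmaRatio kj nj pa p0 =
      sigmaRatio kprev nprev pa p0 * sigmaRatio (kj - kprev) (nj - nprev) pa p0 := by
  rw [sigma_alt _ _ _ _ h0 h1 h2, sigma_alt _ _ _ _ h0 h1 h2, sigma_alt _ _ _ _ h0 h1 h2]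
  have e1 : kj = kprev + (kj - kprev) := by omega
  have e2 : nj - kj = (nprev - kprev) + ((nj - nprev) - (kj - kprev)) := by omega
  rw [e2]
  nth_rewrite 1 [e1]
  rw [pow_add, pow_add]
  ring

lemma tau1_ge (k n : ℕ) (pa p0 : ℝ) (h0 : 0 < p0) (h1 : p0 < pa) (h2 : pa < 1)
    (hkn : k ≤ n) : sigmaRatio k n pa p0 ≤ tau1 k n pa p0 := by
  have hpa : 0 < pa := lt_trans h0 h1
  have h1pa : (0:ℝ) < 1 - pa := by linarith
  have h1p0 : (0:ℝ) < 1 - p0 := by linarith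
  have htail0 : 0 < binTail k n p0 := by
    apply Finset.sum_pos
    · intro i hi
      simp only [Finset.mem_Icc] at hi
      have : 0 < n.choose i := Nat.choose_pos hi.2
      unfold binPMF
      positivity
    · exact ⟨k, by simp [hkn]⟩
  have key : sigmaRatio k n pa p0 * binTail k n p0 ≤ binTail k n pa := by
    unfold binTail
    rw [Finset.mul_sum]
    apply Finset.sum_le_sum
    intro i hi
    simp only [Finset.mem_Icc] at hi
    have hpmf : binPMF n i pa = sigmaRatio i n pa p0 * binPMF n i p0 := by
      unfold binPMF sigmaRatio
      field_simp
    rw [hpmf]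
    have hpmf0 : 0 ≤ binPMF n i p0 := by unfold binPMF; positivity
    apply mul_le_mul_of_nonneg_right _ hpmf0
    rw [sigma_alt _ _ _ _ h0 h1 h2, sigma_alt _ _ _ _ h0 h1 h2]
    have hr : (1:ℝ) ≤ pa / p0 := (one_le_div h0).2 (le_of_lt h1)
    have hs : (1 - pa) / (1 - p0) ≤ 1 := by
      rw [div_le_one h1p0]; linarith
    have hsnn : (0:ℝ) ≤ (1 - pa) / (1 - p0) := by positivity
    calc (pa / p0) ^ k * ((1 - pa) / (1 - p0)) ^ (n - k)
        ≤ (pa / p0) ^ i * ((1 - pa) / (1 - p0)) ^ (n - k) := by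
          apply mul_le_mul_of_nonneg_right (pow_le_pow_right₀ hr hi.1) (by positivity)
      _ ≤ (pa / p0) ^ i * ((1 - pa) / (1 - p0)) ^ (n - i) := by
          apply mul_le_mul_of_nonneg_left (pow_le_pow_of_le_one hsnn hs (by omega)) (by positivity)
  unfold tau1
  rw [le_div_iff₀ htail0]
  exact key

theorem stmt_7 (p0 pa α : ℝ) (kprev kj nprev nj : ℕ)
    (h0 : 0 < p0) (h1 : p0 < pa) (h2 : pa < 1)
    (hα0 : 0 < α) (hα1 : α < 1)
    (hkk : kprev ≤ kj) (hnn : nprev ≤ nj)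
    (hkprev : kprev ≤ nprev) (hmarg : kj - kprev ≤ nj - nprev)
    (hEoR : sigmaRatio kj nj pa p0 ≥ 1 / α) :
    sigmaRatio kprev nprev pa p0 * tau1 (kj - kprev) (nj - nprev) pa p0 ≥ 1 / α := by
  have hsp := sigma_pos kprev nprev pa p0 h0 h1 h2
  have ht := tau1_ge (kj - kprev) (nj - nprev) pa p0 h0 h1 h2 hmarg
  calc 1 / α ≤ sigmaRatio kj nj pa p0 := hEoR
    _ = sigmaRatio kprev nprev pa p0 * sigmaRatio (kj - kprev) (nj - nprev) pa p0 :=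
        sigma_mul kprev kj nprev nj pa p0 h0 h1 h2 hkk hnn hkprev hmarg
    _ ≤ sigmaRatio kprev nprev pa p0 * tau1 (kj - kprev) (nj - nprev) pa p0 :=
        mul_le_mul_of_nonneg_left ht (le_of_lt hsp)
end
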